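/- The function φ(u,s) = (√(1 − u + s²) + s)² / ((1 − u)²·√(1 − u + s²)), defined on the open set {(u,s) ∈ ℝ² : u < 1 and 1 − u + s² > 0}, satisfies the projective PDE (∗): φ₂₂ = 2(φ₁ − s·φ₁₂). -/

import Mathlib

/-- First partial derivative of `f = f(u,s)` with respect to `u`. -/
noncomputable def pd1 (f : ℝ → ℝ → ℝ) (u s : ℝ) : ℝ := deriv (fun t => f t s) u

/-- First partial derivative of `f = f(u,s)` with respect to `s`. -/
noncomputable def pd2 (f : ℝ → ℝ → ℝ) (u s : ℝ) : ℝ := deriv (f u) s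

/-- The defining function of the square metric in navigation-type form. -/
noncomputable def phi (u s : ℝ) : ℝ :=
  (Real.sqrt (1 - u + s ^ 2) + s) ^ 2 / ((1 - u) ^ 2 * Real.sqrt (1 - u + s ^ 2))

noncomputable def F1 (u s : ℝ) : ℝ :=
  (Real.sqrt (1 - u + s ^ 2) + s) *
    ((Real.sqrt (1 - u + s ^ 2) + s) * (4 * (1 - u) * Real.sqrt (1 - u + s ^ 2) ^ 2 + (1 - u) ^ 2)
      - 2 * (1 - u) ^ 2 * Real.sqrt (1 - u + s ^ 2)) /
    (2 * (1 - u) ^ 4 * Real.sqrt (1 - u + s ^ 2) ^ 3)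

noncomputable def F2 (u s : ℝ) : ℝ :=
  (Real.sqrt (1 - u + s ^ 2) + s) ^ 2 * (2 * Real.sqrt (1 - u + s ^ 2) - s) /
    ((1 - u) ^ 2 * Real.sqrt (1 - u + s ^ 2) ^ 3)

noncomputable def F22 (u s : ℝ) : ℝ :=
  3 * (Real.sqrt (1 - u + s ^ 2) + s) ^ 2 * (Real.sqrt (1 - u + s ^ 2) - s) ^ 2 /
    ((1 - u) ^ 2 * Real.sqrt (1 - u + s ^ 2) ^ 5)

noncomputable def F12 (u s : ℝ) : ℝ :=
  (Real.sqrt (1 - u + s ^ 2) + s) *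
    (8 * (1 - u) * Real.sqrt (1 - u + s ^ 2) ^ 2 * (Real.sqrt (1 - u + s ^ 2) + s) ^ 2
      - 3 * s * ((Real.sqrt (1 - u + s ^ 2) + s) *
          (4 * (1 - u) * Real.sqrt (1 - u + s ^ 2) ^ 2 + (1 - u) ^ 2)
        - 2 * (1 - u) ^ 2 * Real.sqrt (1 - u + s ^ 2))) /
    (2 * (1 - u) ^ 4 * Real.sqrt (1 - u + s ^ 2) ^ 5)

lemma hderQs (u s : ℝ) : HasDerivAt (fun y : ℝ => 1 - u + y ^ 2) (2 * s) s := by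
  simpa using (hasDerivAt_pow 2 s).const_add (1 - u)

lemma hderQu (u s : ℝ) : HasDerivAt (fun t : ℝ => 1 - t + s ^ 2) (-1) u := by
  simpa using ((hasDerivAt_id u).const_sub 1).add_const (s ^ 2)

lemma hder2 (u s : ℝ) (hu : u < 1) (hQ : 0 < 1 - u + s ^ 2) :
    HasDerivAt (fun y => phi u y) (F2 u s) s := by
  have hQ' : (1 - u + s ^ 2) ≠ 0 := ne_of_gt hQ
  have hrpos : 0 < Real.sqrt (1 - u + s ^ 2) := Real.sqrt_pos.2 hQ
  have hr0 := ne_of_gt hrpos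
  have hv : (1 : ℝ) - u ≠ 0 := ne_of_gt (by linarith)
  have hr := (hderQs u s).sqrt hQ'
  have hnum := (hr.add (hasDerivAt_id s)).pow 2
  have hden := hr.const_mul ((1 - u) ^ 2)
  have hden0 : (1 - u) ^ 2 * Real.sqrt (1 - u + s ^ 2) ≠ 0 := mul_ne_zero (pow_ne_zero _ hv) hr0
  have H := hnum.div hden hden0
  simp only [phi]
  refine HasDerivAt.congr_deriv H ?_
  simp only [F2, id_eq, Pi.add_apply, Pi.sub_apply, Pi.mul_apply, Pi.pow_apply]
  set r := Real.sqrt (1 - u + s ^ 2) with hrdef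
  have hr2 : r ^ 2 = 1 - u + s ^ 2 := Real.sq_sqrt hQ.le
  field_simp
  ring

lemma hder1 (u s : ℝ) (hu : u < 1) (hQ : 0 < 1 - u + s ^ 2) :
    HasDerivAt (fun t => phi t s) (F1 u s) u := by
  have hQ' : (1 - u + s ^ 2) ≠ 0 := ne_of_gt hQ
  have hrpos : 0 < Real.sqrt (1 - u + s ^ 2) := Real.sqrt_pos.2 hQ
  have hr0 := ne_of_gt hrpos
  have hv : (1 : ℝ) - u ≠ 0 := ne_of_gt (by linarith)
  have hr := (hderQu u s).sqrt hQ'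
  have hnum := (hr.add_const s).pow 2
  have hvsq := ((hasDerivAt_id u).const_sub 1).pow 2
  have hden := hvsq.mul hr
  have hden0 : (1 - u) ^ 2 * Real.sqrt (1 - u + s ^ 2) ≠ 0 := mul_ne_zero (pow_ne_zero _ hv) hr0
  have H := hnum.div hden hden0
  simp only [phi]
  refine HasDerivAt.congr_deriv H ?_
  simp only [F1, id_eq, Pi.add_apply, Pi.sub_apply, Pi.mul_apply, Pi.pow_apply]
  set r := Real.sqrt (1 - u + s ^ 2) with hrdef
  have hr2 : r ^ 2 = 1 - u + s ^ 2 := Real.sq_sqrt hQ.le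
  field_simp
  ring

lemma hder22 (u s : ℝ) (hu : u < 1) (hQ : 0 < 1 - u + s ^ 2) :
    HasDerivAt (fun y => F2 u y) (F22 u s) s := by
  have hQ' : (1 - u + s ^ 2) ≠ 0 := ne_of_gt hQ
  have hrpos : 0 < Real.sqrt (1 - u + s ^ 2) := Real.sqrt_pos.2 hQ
  have hr0 := ne_of_gt hrpos
  have hv : (1 : ℝ) - u ≠ 0 := ne_of_gt (by linarith)
  have hr := (hderQs u s).sqrt hQ'
  have hc := ((hr.add (hasDerivAt_id s)).pow 2).mul
    ((hr.const_mul 2).sub (hasDerivAt_id s))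
  have hd := (hr.pow 3).const_mul ((1 - u) ^ 2)
  have hd0 : (1 - u) ^ 2 * Real.sqrt (1 - u + s ^ 2) ^ 3 ≠ 0 := mul_ne_zero (pow_ne_zero _ hv) (pow_ne_zero _ hr0)
  have H := hc.div hd hd0
  simp only [F2]
  refine HasDerivAt.congr_deriv H ?_
  simp only [F22, id_eq, Pi.add_apply, Pi.sub_apply, Pi.mul_apply, Pi.pow_apply]
  set r := Real.sqrt (1 - u + s ^ 2) with hrdef
  have hr2 : r ^ 2 = 1 - u + s ^ 2 := Real.sq_sqrt hQ.le
  field_simp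
  ring

set_option maxHeartbeats 2000000 in
lemma hder12 (u s : ℝ) (hu : u < 1) (hQ : 0 < 1 - u + s ^ 2) :
    HasDerivAt (fun y => F1 u y) (F12 u s) s := by
  have hQ' : (1 - u + s ^ 2) ≠ 0 := ne_of_gt hQ
  have hrpos : 0 < Real.sqrt (1 - u + s ^ 2) := Real.sqrt_pos.2 hQ
  have hr0 := ne_of_gt hrpos
  have hv : (1 : ℝ) - u ≠ 0 := ne_of_gt (by linarith)
  have hr := (hderQs u s).sqrt hQ'
  have hradd := hr.add (hasDerivAt_id s)
  have hA := ((hr.pow 2).const_mul (4 * (1 - u))).add_const ((1 - u) ^ 2)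
  have hB := hradd.mul hA
  have hC := hB.sub (hr.const_mul (2 * (1 - u) ^ 2))
  have hc := hradd.mul hC
  have hd := (hr.pow 3).const_mul (2 * (1 - u) ^ 4)
  have hd0 : 2 * (1 - u) ^ 4 * Real.sqrt (1 - u + s ^ 2) ^ 3 ≠ 0 := mul_ne_zero (mul_ne_zero two_ne_zero (pow_ne_zero _ hv)) (pow_ne_zero _ hr0)
  have H := hc.div hd hd0
  simp only [F1]
  refine HasDerivAt.congr_deriv H ?_
  simp only [F12, id_eq, Pi.add_apply, Pi.sub_apply, Pi.mul_apply, Pi.pow_apply]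
  set r := Real.sqrt (1 - u + s ^ 2) with hrdef
  have hr2 : r ^ 2 = 1 - u + s ^ 2 := Real.sq_sqrt hQ.le
  field_simp
  ring

lemma key (u s : ℝ) (hu : u < 1) (hQ : 0 < 1 - u + s ^ 2) :
    F22 u s = 2 * (F1 u s - s * F12 u s) := by
  have hrpos : 0 < Real.sqrt (1 - u + s ^ 2) := Real.sqrt_pos.2 hQ
  have hr0 := ne_of_gt hrpos
  have hv : (1 : ℝ) - u ≠ 0 := ne_of_gt (by linarith)
  have hr2 : Real.sqrt (1 - u + s ^ 2) ^ 2 = 1 - u + s ^ 2 := Real.sq_sqrt hQ.le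
  simp only [F22, F1, F12]
  set r := Real.sqrt (1 - u + s ^ 2) with hrdef
  field_simp
  clear_value r
  have hu' : u = 1 - r ^ 2 + s ^ 2 := by linarith
  subst hu'
  ring

/-- `φ(u,s) = (√(1 − u + s²) + s)²/((1 − u)²·√(1 − u + s²))` satisfies the
projective PDE `φ₂₂ = 2(φ₁ − s·φ₁₂)` on `{(u,s) : u < 1, 1 − u + s² > 0}`. -/
theorem stmt_2 : ∀ u s : ℝ, u < 1 → 0 < 1 - u + s ^ 2 →
    pd2 (pd2 phi) u s = 2 * (pd1 phi u s - s * pd2 (pd1 phi) u s) := by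
  intro u s hu hQ
  have hopen : ∀ᶠ y in nhds s, 0 < 1 - u + y ^ 2 := by
    have hc : ContinuousAt (fun y : ℝ => 1 - u + y ^ 2) s := by fun_prop
    exact continuousAt_const.eventually_lt hc hQ
  have h2ev : (pd2 phi u) =ᶠ[nhds s] fun y => F2 u y :=
    hopen.mono fun y hy => (hder2 u y hu hy).deriv
  have h1ev : (fun y => pd1 phi u y) =ᶠ[nhds s] fun y => F1 u y :=
    hopen.mono fun y hy => (hder1 u y hu hy).deriv
  have e22 : pd2 (pd2 phi) u s = F22 u s := by
    simp only [pd2]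
    rw [h2ev.deriv_eq]
    exact (hder22 u s hu hQ).deriv
  have e1 : pd1 phi u s = F1 u s := (hder1 u s hu hQ).deriv
  have e12 : pd2 (pd1 phi) u s = F12 u s := by
    simp only [pd2]
    rw [h1ev.deriv_eq]
    exact (hder12 u s hu hQ).deriv
  rw [e22, e1, e12]
  exact key u s hu hQ
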